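/- In the category LRF of labeled rooted forests, for a forest F and admissible cut C, the sequence ∅ → P_C(F) → F → R_C(F) → ∅ (with maps (C_null, C, id) and (C, C_full, id)) is a short exact sequence, and every short exact sequence ∅ → A → F → B → ∅ in LRF is obtained from one of this form by composing with isomorphisms A ≅ P_C(F) and R_C(F) ≅ B. -/

import Mathlib

attribute [local instance] Classical.propDecidable

noncomputable section

/-- A labeled rooted forest: a finite set of vertex labels together with a
parent function (`none` = root), acyclic via a depth function. -/
structure Forest where
  verts : Finset ℕ
  parent : ℕ → Option ℕ
  parent_mem : ∀ v ∈ verts, ∀ p, parent v = some p → p ∈ verts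
  wf : ∃ d : ℕ → ℕ, ∀ v ∈ verts, ∀ p, parent v = some p → d p < d v

namespace Forest

/-- `S` is the vertex set of a subforest of `F` (the branches `P_C(F)` severed by an
admissible cut `C`): a subset of the vertices closed under passing to children. -/
def IsSub (F : Forest) (S : Finset ℕ) : Prop :=
  S ⊆ F.verts ∧ ∀ v ∈ S, ∀ w ∈ F.verts, F.parent w = some v → w ∈ S

/-- The subforest `P_C(F)` determined by the (descendant-closed) vertex set `S`. -/
def restrict (F : Forest) (S : Finset ℕ) : Forest where
  verts := S ∩ F.verts
  parent v := (F.parent v).bind fun p =>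
    if v ∈ S ∩ F.verts ∧ p ∈ S ∩ F.verts then some p else none
  parent_mem := by
    intro v hv p hp
    beta_reduce at hp
    cases h : F.parent v with
    | none => rw [h] at hp; simp at hp
    | some q =>
      rw [h] at hp
      simp only [Option.bind_some] at hp
      split at hp
      · rename_i hc; cases hp; exact hc.2
      · simp at hp
  wf := by
    obtain ⟨d, hd⟩ := F.wf
    refine ⟨d, ?_⟩
    intro v hv p hp
    beta_reduce at hp
    cases h : F.parent v with
    | none => rw [h] at hp; simp at hp
    | some q =>
      rw [h] at hp
      simp only [Option.bind_some] at hp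
      split at hp
      · rename_i hc; cases hp
        exact hd v (Finset.mem_inter.mp hv).2 _ h
      · simp at hp

/-- The root part `R_C(F) = F/P_C(F)` determined by the severed vertex set `S`. -/
def quot (F : Forest) (S : Finset ℕ) : Forest where
  verts := F.verts \ S
  parent v := (F.parent v).bind fun p =>
    if v ∈ F.verts \ S ∧ p ∈ F.verts \ S then some p else none
  parent_mem := by
    intro v hv p hp
    beta_reduce at hp
    cases h : F.parent v with
    | none => rw [h] at hp; simp at hp
    | some q =>
      rw [h] at hp
      simp only [Option.bind_some] at hp
      split at hp
      · rename_i hc; cases hp; exact hc.2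
      · simp at hp
  wf := by
    obtain ⟨d, hd⟩ := F.wf
    refine ⟨d, ?_⟩
    intro v hv p hp
    beta_reduce at hp
    cases h : F.parent v with
    | none => rw [h] at hp; simp at hp
    | some q =>
      rw [h] at hp
      simp only [Option.bind_some] at hp
      split at hp
      · rename_i hc; cases hp
        exact hd v (Finset.mem_sdiff.mp hv).1 _ h
      · simp at hp

/-- `φ` realizes an isomorphism of labeled rooted forests (a root- and
incidence-preserving bijection on labels). -/
def IsoMap (F G : Forest) (φ : ℕ → ℕ) : Prop :=
  Set.BijOn φ (F.verts : Set ℕ) (G.verts : Set ℕ) ∧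
    ∀ v ∈ F.verts, (F.parent v).map φ = G.parent (φ v)

/-- Isomorphism of labeled rooted forests. -/
def Iso (F G : Forest) : Prop := ∃ φ, IsoMap F G φ

/-- A function on forests which only depends on the isomorphism class. -/
def Invariant (f : Forest → ℚ) : Prop := ∀ F G, Iso F G → f F = f G

/-- A function on forests supported on finitely many isomorphism classes. -/
def FinSupp (f : Forest → ℚ) : Prop :=
  ∃ s : Finset Forest, ∀ F, f F ≠ 0 → ∃ G ∈ s, Iso F G

/-- The Ringel-Hall convolution product:
`(f × g)(F) = ∑_{G ⊆ F} f(G) · g(F/G)`, the sum running over subforests of `F`. -/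
def conv (f g : Forest → ℚ) : Forest → ℚ := fun F =>
  ∑ S ∈ F.verts.powerset, if F.IsSub S then f (F.restrict S) * g (F.quot S) else 0

end Forest

end

namespace Forest

/-- A (raw) morphism datum in the category `LRF`: a triple `(C₁, C₂, f)`. -/
structure Mor where
  cut1 : Finset ℕ
  cut2 : Finset ℕ
  map : ℕ → ℕ

/-- `(C₁, C₂, f)` is a morphism `F → G` in `LRF`: `C₁` is an admissible cut of `F`
(recorded by the severed vertex set), `C₂` one of `G`, and `f` an isomorphism
`R_{C₁}(F) ≅ P_{C₂}(G)`. -/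
def IsMor (F G : Forest) (m : Mor) : Prop :=
  F.IsSub m.cut1 ∧ G.IsSub m.cut2 ∧
    IsoMap (F.quot m.cut1) (G.restrict m.cut2) m.map

/-- Composition of morphisms in `LRF` (`m : F → F₂` followed by `n : F₂ → F₃`):
the cut of `n` is pulled back through `m` to a cut `E₁ ≥ C₁` of `F`, and the new
image is the image of `R_{E₁}(F)` under the composite map. -/
noncomputable def Mor.comp (F : Forest) (m n : Mor) : Mor :=
  ⟨m.cut1 ∪ ((F.quot m.cut1).verts.filter fun v => m.map v ∈ n.cut1),
   ((F.quot (m.cut1 ∪ ((F.quot m.cut1).verts.filter fun v => m.map v ∈ n.cut1))).verts).image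
     (n.map ∘ m.map),
   n.map ∘ m.map⟩

/-- The identity morphism `(C_null, C_full, id)` of `F`. -/
def idMor (F : Forest) : Mor := ⟨∅, F.verts, id⟩

/-- Equality of morphisms out of `F` (the map only matters on `R_{C₁}(F)`). -/
def MorEq (F : Forest) (m n : Mor) : Prop :=
  m.cut1 = n.cut1 ∧ m.cut2 = n.cut2 ∧
    ∀ v ∈ (F.quot m.cut1).verts, m.map v = n.map v

/-- The zero morphisms `F → G`: morphisms with empty image (factoring through `∅`). -/
def IsZeroMor (F G : Forest) (m : Mor) : Prop := IsMor F G m ∧ m.cut2 = ∅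

end Forest

namespace Forest

/-- `i : A → L` is a kernel of `p : L → B` in `LRF`. -/
def IsKernelOf (A L B : Forest) (i p : Mor) : Prop :=
  IsZeroMor A B (Mor.comp A i p) ∧
    ∀ (A' : Forest) (u : Mor), IsMor A' L u → IsZeroMor A' B (Mor.comp A' u p) →
      ∃ w : Mor, IsMor A' A w ∧ MorEq A' (Mor.comp A' w i) u ∧
        ∀ w' : Mor, IsMor A' A w' → MorEq A' (Mor.comp A' w' i) u → MorEq A' w w'

/-- `p : L → B` is a cokernel of `i : A → L` in `LRF`. -/
def IsCokernelOf (A L B : Forest) (i p : Mor) : Prop :=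
  IsZeroMor A B (Mor.comp A i p) ∧
    ∀ (B' : Forest) (u : Mor), IsMor L B' u → IsZeroMor A B' (Mor.comp A i u) →
      ∃ w : Mor, IsMor B B' w ∧ MorEq L (Mor.comp L p w) u ∧
        ∀ w' : Mor, IsMor B B' w' → MorEq L (Mor.comp L p w') u → MorEq B w w'

/-- `∅ → A → L → B → ∅` is a short exact sequence in `LRF`. -/
def IsShortExact (A L B : Forest) (i p : Mor) : Prop :=
  IsMor A L i ∧ IsMor L B p ∧ IsKernelOf A L B i p ∧ IsCokernelOf A L B i p

end Forest

namespace Forest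

attribute [local instance] Classical.propDecidable

lemma restrict_verts' (F : Forest) (S : Finset ℕ) : (F.restrict S).verts = S ∩ F.verts := rfl

lemma quot_verts' (F : Forest) (S : Finset ℕ) : (F.quot S).verts = F.verts \ S := rfl

lemma restrict_parent' (F : Forest) (S : Finset ℕ) (v : ℕ) :
    (F.restrict S).parent v = (F.parent v).bind
      (fun p => if v ∈ S ∩ F.verts ∧ p ∈ S ∩ F.verts then some p else none) := rfl

lemma quot_parent' (F : Forest) (S : Finset ℕ) (v : ℕ) :
    (F.quot S).parent v = (F.parent v).bind
      (fun p => if v ∈ F.verts \ S ∧ p ∈ F.verts \ S then some p else none) := rfl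

lemma restrict_parent_eq_some {F : Forest} {S : Finset ℕ} {v p : ℕ} :
    (F.restrict S).parent v = some p ↔
      F.parent v = some p ∧ v ∈ S ∩ F.verts ∧ p ∈ S ∩ F.verts := by
  rw [restrict_parent']
  cases h : F.parent v with
  | none => simp
  | some q =>
    simp only [Option.bind_some]
    constructor
    · intro hp
      split at hp
      · rename_i hc; cases hp; exact ⟨rfl, hc⟩
      · simp at hp
    · rintro ⟨hq, h1, h2⟩; cases hq; rw [if_pos ⟨h1, h2⟩]

lemma quot_parent_eq_some {F : Forest} {S : Finset ℕ} {v p : ℕ} :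
    (F.quot S).parent v = some p ↔
      F.parent v = some p ∧ v ∈ F.verts \ S ∧ p ∈ F.verts \ S := by
  rw [quot_parent']
  cases h : F.parent v with
  | none => simp
  | some q =>
    simp only [Option.bind_some]
    constructor
    · intro hp
      split at hp
      · rename_i hc; cases hp; exact ⟨rfl, hc⟩
      · simp at hp
    · rintro ⟨hq, h1, h2⟩; cases hq; rw [if_pos ⟨h1, h2⟩]

lemma isoMap_id (F : Forest) : IsoMap F F id := by
  refine ⟨Set.bijOn_id _, ?_⟩
  intro v _
  simp

lemma isoMap_congr {G G' H H' : Forest} {f : ℕ → ℕ}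
    (hGv : G.verts = G'.verts)
    (hGp : ∀ v ∈ G.verts, G.parent v = G'.parent v)
    (hHv : H.verts = H'.verts)
    (hHp : ∀ v ∈ H.verts, H.parent v = H'.parent v)
    (h : IsoMap G H f) : IsoMap G' H' f := by
  obtain ⟨hb, hp⟩ := h
  refine ⟨?_, ?_⟩
  · rw [← hGv, ← hHv]; exact hb
  · intro v hv
    rw [← hGv] at hv
    rw [← hGp v hv, ← hHp _ (hb.mapsTo hv), hp v hv]

lemma isoMap_of_empty {G H : Forest} (f : ℕ → ℕ) (hG : G.verts = ∅) (hH : H.verts = ∅) :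
    IsoMap G H f := by
  refine ⟨?_, ?_⟩
  · rw [hG, hH]; simp
  · intro v hv; rw [hG] at hv; simp at hv

lemma isoMap_image {G H : Forest} {f : ℕ → ℕ} (h : IsoMap G H f) :
    G.verts.image f = H.verts := by
  have := h.1.image_eq
  rwa [← Finset.coe_image, Finset.coe_inj] at this

lemma isSub_empty (F : Forest) : F.IsSub ∅ := ⟨Finset.empty_subset _, by simp⟩

lemma isSub_self (F : Forest) : F.IsSub F.verts := ⟨Finset.Subset.refl _, fun _ _ w hw _ => hw⟩

lemma quot_empty_verts (F : Forest) : (F.quot ∅).verts = F.verts := by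
  rw [quot_verts', Finset.sdiff_empty]

lemma quot_empty_parent (F : Forest) (v : ℕ) (hv : v ∈ F.verts) :
    (F.quot ∅).parent v = F.parent v := by
  rw [quot_parent']
  cases h : F.parent v with
  | none => rfl
  | some p =>
    rw [Option.bind_some, if_pos]
    simp only [Finset.sdiff_empty]
    exact ⟨hv, F.parent_mem v hv p h⟩

lemma restrict_self_verts (F : Forest) : (F.restrict F.verts).verts = F.verts := by
  rw [restrict_verts', Finset.inter_self]

lemma restrict_self_parent (F : Forest) (v : ℕ) (hv : v ∈ F.verts) :
    (F.restrict F.verts).parent v = F.parent v := by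
  rw [restrict_parent']
  cases h : F.parent v with
  | none => rfl
  | some p =>
    rw [Option.bind_some, if_pos]
    simp only [Finset.inter_self]
    exact ⟨hv, F.parent_mem v hv p h⟩

lemma isMor_incl {F : Forest} {S : Finset ℕ} (h : F.IsSub S) :
    IsMor (F.restrict S) F ⟨∅, S, id⟩ := by
  refine ⟨isSub_empty _, h, ?_⟩
  exact isoMap_congr (quot_empty_verts _).symm
    (fun v hv => (quot_empty_parent _ v hv).symm) rfl (fun _ _ => rfl) (isoMap_id _)

lemma isMor_proj {F : Forest} {S : Finset ℕ} (h : F.IsSub S) :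
    IsMor F (F.quot S) ⟨S, (F.quot S).verts, id⟩ := by
  refine ⟨h, isSub_self _, ?_⟩
  exact isoMap_congr rfl (fun _ _ => rfl) (restrict_self_verts _).symm
    (fun v hv => (restrict_self_parent _ v hv).symm) (isoMap_id _)

lemma isMor_zero (F G : Forest) (f : ℕ → ℕ) : IsMor F G ⟨F.verts, ∅, f⟩ :=
  ⟨isSub_self F, isSub_empty G,
    isoMap_of_empty f (by rw [quot_verts', Finset.sdiff_self])
      (by rw [restrict_verts', Finset.empty_inter])⟩

lemma comp_cut1 (F : Forest) (m n : Mor) :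
    (Mor.comp F m n).cut1 =
      m.cut1 ∪ (F.verts \ m.cut1).filter (fun v => m.map v ∈ n.cut1) := rfl

lemma comp_cut2 (F : Forest) (m n : Mor) :
    (Mor.comp F m n).cut2 = (F.verts \ (Mor.comp F m n).cut1).image (n.map ∘ m.map) := rfl

lemma comp_map (F : Forest) (m n : Mor) : (Mor.comp F m n).map = n.map ∘ m.map := rfl

lemma comp_cut1_eq_of_forall {F : Forest} {m n : Mor} (h1 : m.cut1 ⊆ F.verts)
    (h : ∀ v ∈ F.verts \ m.cut1, m.map v ∈ n.cut1) :
    (Mor.comp F m n).cut1 = F.verts := by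
  rw [comp_cut1]; ext v
  simp only [Finset.mem_union, Finset.mem_filter, Finset.mem_sdiff]
  constructor
  · rintro (hv | ⟨⟨hv, _⟩, _⟩)
    exacts [h1 hv, hv]
  · intro hv
    by_cases hc : v ∈ m.cut1
    · exact Or.inl hc
    · exact Or.inr ⟨⟨hv, hc⟩, h v (Finset.mem_sdiff.mpr ⟨hv, hc⟩)⟩

lemma isZeroMor_comp {F G' : Forest} {m n : Mor} (h1 : m.cut1 ⊆ F.verts)
    (h : ∀ v ∈ F.verts \ m.cut1, m.map v ∈ n.cut1) :
    IsZeroMor F G' (Mor.comp F m n) := by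
  have hc := comp_cut1_eq_of_forall (n := n) h1 h
  have hcut2 : (Mor.comp F m n).cut2 = ∅ := by
    rw [comp_cut2, hc, Finset.sdiff_self, Finset.image_empty]
  refine ⟨⟨?_, ?_, ?_⟩, hcut2⟩
  · rw [hc]; exact isSub_self F
  · rw [hcut2]; exact isSub_empty _
  · exact isoMap_of_empty _ (by rw [quot_verts', hc, Finset.sdiff_self])
      (by rw [restrict_verts', hcut2, Finset.empty_inter])

lemma forall_of_comp_cut2_empty {F : Forest} {m n : Mor}
    (h : (Mor.comp F m n).cut2 = ∅) : ∀ v ∈ F.verts \ m.cut1, m.map v ∈ n.cut1 := by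
  intro v hv
  rw [comp_cut2, Finset.image_eq_empty] at h
  by_contra hn
  have hmem : v ∈ F.verts \ (Mor.comp F m n).cut1 := by
    rw [comp_cut1]
    simp only [Finset.mem_sdiff, Finset.mem_union, Finset.mem_filter] at hv ⊢
    exact ⟨hv.1, fun hc => hc.elim hv.2 fun hc' => hn hc'.2⟩
  rw [h] at hmem
  exact absurd hmem (Finset.notMem_empty v)

lemma restrict_restrict_verts {F : Forest} {S C : Finset ℕ} (h : C ⊆ S) :
    ((F.restrict S).restrict C).verts = (F.restrict C).verts := by
  simp only [restrict_verts']
  ext v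
  simp only [Finset.mem_inter]
  exact ⟨fun ⟨a, _, c⟩ => ⟨a, c⟩, fun ⟨a, c⟩ => ⟨a, h a, c⟩⟩

lemma restrict_restrict_parent {F : Forest} {S C : Finset ℕ} (h : C ⊆ S) (v : ℕ) :
    ((F.restrict S).restrict C).parent v = (F.restrict C).parent v := by
  rw [restrict_parent', restrict_parent', restrict_parent']
  cases hp : F.parent v with
  | none => rfl
  | some p =>
    simp only [Option.bind_some]
    have hsets : ∀ x : ℕ, x ∈ C ∩ (F.restrict S).verts ↔ x ∈ C ∩ F.verts := by
      intro x
      simp only [restrict_verts', Finset.mem_inter]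
      exact ⟨fun ⟨a, _, c⟩ => ⟨a, c⟩, fun ⟨a, c⟩ => ⟨a, h a, c⟩⟩
    by_cases hA : v ∈ S ∩ F.verts ∧ p ∈ S ∩ F.verts
    · rw [if_pos hA, Option.bind_some]
      by_cases hB : v ∈ C ∩ F.verts ∧ p ∈ C ∩ F.verts
      · rw [if_pos (by rw [hsets, hsets]; exact hB), if_pos hB]
      · rw [if_neg (by rw [hsets, hsets]; exact hB), if_neg hB]
    · rw [if_neg hA, Option.bind_none, if_neg]
      intro hB
      apply hA
      simp only [Finset.mem_inter] at hB ⊢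
      exact ⟨⟨h hB.1.1, hB.1.2⟩, ⟨h hB.2.1, hB.2.2⟩⟩

lemma quot_quot_verts {F : Forest} {S D : Finset ℕ} (h : S ⊆ D) :
    ((F.quot S).quot (D \ S)).verts = (F.quot D).verts := by
  simp only [quot_verts']
  ext v
  simp only [Finset.mem_sdiff]
  constructor
  · rintro ⟨⟨hv, hs⟩, hd⟩
    refine ⟨hv, fun hD => hd ⟨hD, hs⟩⟩
  · rintro ⟨hv, hd⟩
    exact ⟨⟨hv, fun hs => hd (h hs)⟩, fun hds => hd hds.1⟩

lemma quot_quot_parent {F : Forest} {S D : Finset ℕ} (h : S ⊆ D) (v : ℕ) :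
    ((F.quot S).quot (D \ S)).parent v = (F.quot D).parent v := by
  rw [quot_parent', quot_parent', quot_parent']
  cases hp : F.parent v with
  | none => rfl
  | some p =>
    simp only [Option.bind_some]
    have hsets : ∀ x : ℕ, x ∈ (F.quot S).verts \ (D \ S) ↔ x ∈ F.verts \ D := by
      intro x
      simp only [quot_verts', Finset.mem_sdiff]
      constructor
      · rintro ⟨⟨hv, hs⟩, hd⟩
        exact ⟨hv, fun hD => hd ⟨hD, hs⟩⟩
      · rintro ⟨hv, hd⟩
        exact ⟨⟨hv, fun hs => hd (h hs)⟩, fun hds => hd hds.1⟩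
    by_cases hA : v ∈ F.verts \ S ∧ p ∈ F.verts \ S
    · rw [if_pos hA, Option.bind_some]
      by_cases hB : v ∈ F.verts \ D ∧ p ∈ F.verts \ D
      · rw [if_pos (by rw [hsets, hsets]; exact hB), if_pos hB]
      · rw [if_neg (by rw [hsets, hsets]; exact hB), if_neg hB]
    · rw [if_neg hA, Option.bind_none, if_neg]
      intro hB
      apply hA
      simp only [Finset.mem_sdiff] at hB ⊢
      exact ⟨⟨hB.1.1, fun hs => hB.1.2 (h hs)⟩, ⟨hB.2.1, fun hs => hB.2.2 (h hs)⟩⟩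

lemma morEq_comp_intro {F : Forest} {m n u : Mor}
    (hc1 : m.cut1 ∪ (F.verts \ m.cut1).filter (fun v => m.map v ∈ n.cut1) = u.cut1)
    (hc2 : (F.verts \ u.cut1).image (n.map ∘ m.map) = u.cut2)
    (hmap : ∀ v ∈ F.verts \ u.cut1, n.map (m.map v) = u.map v) :
    MorEq F (Mor.comp F m n) u := by
  have h1 : (Mor.comp F m n).cut1 = u.cut1 := hc1
  refine ⟨h1, ?_, ?_⟩
  · rw [comp_cut2, h1]; exact hc2
  · intro v hv
    rw [quot_verts', h1] at hv
    exact hmap v hv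

lemma morEq_comp_elim {F : Forest} {m n u : Mor} (h : MorEq F (Mor.comp F m n) u) :
    (m.cut1 ∪ (F.verts \ m.cut1).filter (fun v => m.map v ∈ n.cut1) = u.cut1)
    ∧ ((F.verts \ u.cut1).image (n.map ∘ m.map) = u.cut2)
    ∧ ∀ v ∈ F.verts \ u.cut1, n.map (m.map v) = u.map v := by
  obtain ⟨h1, h2, h3⟩ := h
  refine ⟨h1, ?_, fun v hv => h3 v ?_⟩
  · rw [comp_cut2, h1] at h2; exact h2
  · rw [quot_verts', h1]; exact hv

lemma part1 (F : Forest) (S : Finset ℕ) (hS : F.IsSub S) :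
    IsShortExact (F.restrict S) F (F.quot S)
      (⟨∅, S, id⟩ : Mor) (⟨S, (F.quot S).verts, id⟩ : Mor) := by
  have hAv : (F.restrict S).verts = S ∩ F.verts := rfl
  have hzero : IsZeroMor (F.restrict S) (F.quot S)
      (Mor.comp (F.restrict S) ⟨∅, S, id⟩ ⟨S, (F.quot S).verts, id⟩) := by
    apply isZeroMor_comp
    · show (∅ : Finset ℕ) ⊆ _
      exact Finset.empty_subset _
    · intro v hv
      show v ∈ S
      have hv' : v ∈ (F.restrict S).verts := (Finset.mem_sdiff.mp hv).1
      rw [hAv] at hv'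
      exact (Finset.mem_inter.mp hv').1
  refine ⟨isMor_incl hS, isMor_proj hS, ⟨hzero, ?_⟩, ⟨hzero, ?_⟩⟩
  · -- kernel universal property
    intro A' u hu hz
    obtain ⟨hu1, hu2, hu3⟩ := hu
    have hforall : ∀ v ∈ A'.verts \ u.cut1, u.map v ∈ S := forall_of_comp_cut2_empty hz.2
    have himg : (A'.verts \ u.cut1).image u.map = u.cut2 := by
      have h1 := isoMap_image hu3
      rw [quot_verts', restrict_verts', Finset.inter_eq_left.mpr hu2.1] at h1
      exact h1
    have hC2S : u.cut2 ⊆ S := by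
      intro x hx
      rw [← himg] at hx
      obtain ⟨v, hv, rfl⟩ := Finset.mem_image.mp hx
      exact hforall v hv
    refine ⟨u, ⟨hu1, ⟨?_, ?_⟩, ?_⟩, ?_, ?_⟩
    · rw [restrict_verts']
      intro x hx
      exact Finset.mem_inter.mpr ⟨hC2S hx, hu2.1 hx⟩
    · intro v hv x _ hpar
      rw [restrict_parent_eq_some] at hpar
      exact hu2.2 v hv x (Finset.mem_inter.mp hpar.2.1).2 hpar.1
    · exact isoMap_congr rfl (fun _ _ => rfl) (restrict_restrict_verts hC2S).symm
        (fun v _ => (restrict_restrict_parent hC2S v).symm) hu3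
    · apply morEq_comp_intro
      · show u.cut1 ∪ (A'.verts \ u.cut1).filter (fun v => u.map v ∈ (∅ : Finset ℕ)) = u.cut1
        rw [Finset.filter_false_of_mem (fun x _ => by simp), Finset.union_empty]
      · exact himg
      · intro v _; rfl
    · intro w' hw' hme
      obtain ⟨he1, he2, he3⟩ := morEq_comp_elim hme
      have hcc : w'.cut1 = u.cut1 := by
        rw [← he1]
        show w'.cut1 = w'.cut1 ∪ (A'.verts \ w'.cut1).filter
          (fun v => w'.map v ∈ (∅ : Finset ℕ))
        rw [Finset.filter_false_of_mem (fun x _ => by simp), Finset.union_empty]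
      refine ⟨hcc.symm, ?_, ?_⟩
      · have h1 := isoMap_image hw'.2.2
        rw [quot_verts', restrict_verts', Finset.inter_eq_left.mpr hw'.2.1.1] at h1
        rw [← he2, ← h1, hcc]
        rfl
      · intro v hv
        have hv' : v ∈ A'.verts \ u.cut1 := by rw [quot_verts'] at hv; exact hv
        exact (he3 v hv').symm
  · -- cokernel universal property
    intro B' u hu hz
    obtain ⟨hu1, hu2, hu3⟩ := hu
    have hS1 : S ⊆ u.cut1 := by
      have h := forall_of_comp_cut2_empty hz.2
      intro s hs
      have hmem : s ∈ (F.restrict S).verts \ (∅ : Finset ℕ) := by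
        rw [Finset.sdiff_empty]
        exact (show s ∈ S ∩ F.verts from Finset.mem_inter.mpr ⟨hs, hS.1 hs⟩)
      exact h s hmem
    have himg : (F.verts \ u.cut1).image u.map = u.cut2 := by
      have h1 := isoMap_image hu3
      rw [quot_verts', restrict_verts', Finset.inter_eq_left.mpr hu2.1] at h1
      exact h1
    refine ⟨⟨u.cut1 \ S, u.cut2, u.map⟩, ⟨⟨?_, ?_⟩, hu2, ?_⟩, ?_, ?_⟩
    · intro x hx
      have hx' : x ∈ u.cut1 \ S := hx
      rw [quot_verts', Finset.mem_sdiff] at *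
      exact ⟨hu1.1 hx'.1, hx'.2⟩
    · intro v hv x _ hpar
      have hv' : v ∈ u.cut1 \ S := hv
      rw [quot_parent_eq_some] at hpar
      rw [Finset.mem_sdiff] at hv'
      show x ∈ u.cut1 \ S
      rw [Finset.mem_sdiff]
      exact ⟨hu1.2 v hv'.1 x (Finset.mem_sdiff.mp hpar.2.1).1 hpar.1,
        (Finset.mem_sdiff.mp hpar.2.1).2⟩
    · exact isoMap_congr (quot_quot_verts hS1).symm
        (fun v _ => (quot_quot_parent hS1 v).symm) rfl (fun _ _ => rfl) hu3
    · apply morEq_comp_intro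
      · show S ∪ (F.verts \ S).filter (fun v => id v ∈ u.cut1 \ S) = u.cut1
        have hfil : (F.verts \ S).filter (fun v => id v ∈ u.cut1 \ S) = u.cut1 \ S := by
          ext v
          simp only [Finset.mem_filter, Finset.mem_sdiff, id_eq]
          constructor
          · rintro ⟨_, hv⟩; exact hv
          · intro hv; exact ⟨⟨hu1.1 hv.1, hv.2⟩, hv⟩
        rw [hfil, Finset.union_sdiff_of_subset hS1]
      · exact himg
      · intro v _; rfl
    · intro w' hw' hme
      obtain ⟨he1, he2, he3⟩ := morEq_comp_elim hme
      have hw1sub : w'.cut1 ⊆ F.verts \ S := by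
        intro x hx
        rw [← quot_verts']
        exact hw'.1.1 hx
      have hunion : S ∪ w'.cut1 = u.cut1 := by
        rw [← he1]
        show S ∪ w'.cut1 = S ∪ (F.verts \ S).filter (fun v => id v ∈ w'.cut1)
        congr 1
        ext v
        simp only [Finset.mem_filter, Finset.mem_sdiff, id_eq]
        constructor
        · intro hv; exact ⟨Finset.mem_sdiff.mp (hw1sub hv), hv⟩
        · rintro ⟨_, hv⟩; exact hv
      have hw'c1 : w'.cut1 = u.cut1 \ S := by
        ext v
        rw [Finset.mem_sdiff]
        constructor
        · intro hv
          refine ⟨?_, (Finset.mem_sdiff.mp (hw1sub hv)).2⟩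
          rw [← hunion]; exact Finset.mem_union_right _ hv
        · rintro ⟨hv1, hv2⟩
          rw [← hunion] at hv1
          rcases Finset.mem_union.mp hv1 with h' | h'
          · exact absurd h' hv2
          · exact h'
      refine ⟨hw'c1.symm, ?_, ?_⟩
      · have h1 := isoMap_image hw'.2.2
        rw [quot_verts', restrict_verts', Finset.inter_eq_left.mpr hw'.2.1.1] at h1
        rw [← he2, ← h1]
        have hset : F.verts \ u.cut1 = (F.quot S).verts \ w'.cut1 := by
          rw [hw'c1, quot_verts']
          ext v
          simp only [Finset.mem_sdiff]
          constructor
          · rintro ⟨hv, hc⟩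
            exact ⟨⟨hv, fun hs => hc (hS1 hs)⟩, fun hd => hc hd.1⟩
          · rintro ⟨⟨hv, hs⟩, hd⟩
            exact ⟨hv, fun hc => hd ⟨hc, hs⟩⟩
        rw [hset]
        rfl
      · intro v hv
        have hv2 : v ∈ ((F.quot S).quot (u.cut1 \ S)).verts := hv
        rw [quot_quot_verts hS1, quot_verts'] at hv2
        exact (he3 v hv2).symm

lemma part2 (A F B : Forest) (i p : Mor) (h : IsShortExact A F B i p) :
    ∃ S : Finset ℕ, F.IsSub S ∧
      i.cut1 = ∅ ∧ i.cut2 = S ∧ IsoMap A (F.restrict S) i.map ∧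
      p.cut1 = S ∧ p.cut2 = B.verts ∧
      IsoMap (F.quot S) (B.restrict B.verts) p.map := by
  obtain ⟨hi, hp, hker, hcoker⟩ := h
  obtain ⟨hi1, hi2, hi3⟩ := hi
  obtain ⟨hp1, hp2, hp3⟩ := hp
  -- Step 1: `i.cut1 = ∅` (a kernel is monic).
  have hC1 : i.cut1 = ∅ := by
    set A' := A.restrict i.cut1 with hA'
    have hAveq : A'.verts = i.cut1 := by
      show i.cut1 ∩ A.verts = i.cut1
      exact Finset.inter_eq_left.mpr hi1.1
    have huz : IsMor A' F ⟨A'.verts, ∅, id⟩ := isMor_zero A' F id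
    have hzz : IsZeroMor A' B (Mor.comp A' ⟨A'.verts, ∅, id⟩ p) := by
      apply isZeroMor_comp (Finset.Subset.refl _)
      intro v hv
      have hv' : v ∈ A'.verts \ A'.verts := hv
      rw [Finset.sdiff_self] at hv'
      exact absurd hv' (Finset.notMem_empty v)
    obtain ⟨w, hw, hwe, hwu⟩ := hker.2 A' ⟨A'.verts, ∅, id⟩ huz hzz
    have hj : IsMor A' A ⟨∅, i.cut1, id⟩ := isMor_incl hi1
    have hjeq : MorEq A' (Mor.comp A' ⟨∅, i.cut1, id⟩ i) ⟨A'.verts, ∅, id⟩ := by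
      apply morEq_comp_intro
      · show (∅ : Finset ℕ) ∪ (A'.verts \ ∅).filter (fun v => id v ∈ i.cut1) = A'.verts
        rw [Finset.empty_union, Finset.sdiff_empty]
        apply Finset.filter_true_of_mem
        intro x hx
        rw [hAveq] at hx; exact hx
      · show (A'.verts \ A'.verts).image (i.map ∘ id) = ∅
        rw [Finset.sdiff_self, Finset.image_empty]
      · intro v hv
        have hv' : v ∈ A'.verts \ A'.verts := hv
        rw [Finset.sdiff_self] at hv'
        exact absurd hv' (Finset.notMem_empty v)
    have hzeq : MorEq A' (Mor.comp A' ⟨A'.verts, ∅, id⟩ i) ⟨A'.verts, ∅, id⟩ := by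
      apply morEq_comp_intro
      · show A'.verts ∪ (A'.verts \ A'.verts).filter (fun v => id v ∈ i.cut1) = A'.verts
        rw [Finset.sdiff_self, Finset.filter_empty, Finset.union_empty]
      · show (A'.verts \ A'.verts).image (i.map ∘ id) = ∅
        rw [Finset.sdiff_self, Finset.image_empty]
      · intro v hv
        have hv' : v ∈ A'.verts \ A'.verts := hv
        rw [Finset.sdiff_self] at hv'
        exact absurd hv' (Finset.notMem_empty v)
    have h1 : w.cut1 = (∅ : Finset ℕ) := (hwu ⟨∅, i.cut1, id⟩ hj hjeq).1
    have h2 : w.cut1 = A'.verts := (hwu ⟨A'.verts, ∅, id⟩ (isMor_zero A' A id) hzeq).1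
    rw [← hAveq, ← h2, h1]
  -- image of `i.map` is `i.cut2`
  have himgi : A.verts.image i.map = i.cut2 := by
    have h1 := isoMap_image hi3
    rw [hC1, quot_verts', Finset.sdiff_empty, restrict_verts',
      Finset.inter_eq_left.mpr hi2.1] at h1
    exact h1
  -- Step 2: `p.cut1 = i.cut2`
  have hSD : i.cut2 ⊆ p.cut1 := by
    have h := forall_of_comp_cut2_empty hker.1.2
    intro s hs
    rw [← himgi] at hs
    obtain ⟨v, hv, rfl⟩ := Finset.mem_image.mp hs
    apply h
    rw [hC1, Finset.sdiff_empty]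
    exact hv
  have hDS : p.cut1 ⊆ i.cut2 := by
    have hincl : IsMor (F.restrict p.cut1) F ⟨∅, p.cut1, id⟩ := isMor_incl hp1
    have hz2 : IsZeroMor (F.restrict p.cut1) B
        (Mor.comp (F.restrict p.cut1) ⟨∅, p.cut1, id⟩ p) := by
      apply isZeroMor_comp
      · show (∅ : Finset ℕ) ⊆ _
        exact Finset.empty_subset _
      · intro v hv
        show v ∈ p.cut1
        have hv' : v ∈ p.cut1 ∩ F.verts := (Finset.mem_sdiff.mp hv).1
        exact (Finset.mem_inter.mp hv').1
    obtain ⟨w, hw, hwe, _⟩ := hker.2 (F.restrict p.cut1) ⟨∅, p.cut1, id⟩ hincl hz2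
    obtain ⟨he1, he2, he3⟩ := morEq_comp_elim hwe
    have he1' : w.cut1 ∪ ((F.restrict p.cut1).verts \ w.cut1).filter
        (fun v => w.map v ∈ i.cut1) = ∅ := he1
    have hwc1 : w.cut1 = ∅ := (Finset.union_eq_empty.mp he1').1
    intro x hx
    have hxmem : x ∈ (F.restrict p.cut1).verts \ (∅ : Finset ℕ) := by
      rw [Finset.sdiff_empty]
      exact (show x ∈ p.cut1 ∩ F.verts from Finset.mem_inter.mpr ⟨hx, hp1.1 hx⟩)
    have hmx := he3 x hxmem
    have hxq : x ∈ ((F.restrict p.cut1).quot w.cut1).verts := by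
      rw [quot_verts', hwc1, Finset.sdiff_empty]
      exact (show x ∈ p.cut1 ∩ F.verts from Finset.mem_inter.mpr ⟨hx, hp1.1 hx⟩)
    have hwx : w.map x ∈ (A.restrict w.cut2).verts := hw.2.2.1.mapsTo hxq
    have hwx' : w.map x ∈ A.verts :=
      (Finset.mem_inter.mp (show w.map x ∈ w.cut2 ∩ A.verts from hwx)).2
    have hwxq : w.map x ∈ (A.quot i.cut1).verts := by
      rw [quot_verts', hC1, Finset.sdiff_empty]; exact hwx'
    have hfin := hi3.1.mapsTo hwxq
    rw [hmx] at hfin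
    exact (Finset.mem_inter.mp (show x ∈ i.cut2 ∩ F.verts from hfin)).1
  have hD1 : p.cut1 = i.cut2 := Finset.Subset.antisymm hDS hSD
  -- Step 3: `p.cut2 = B.verts` (a cokernel is epic).
  have hT : p.cut2 = B.verts := by
    set B' := B.quot p.cut2 with hB'
    have huz : IsMor F B' ⟨F.verts, ∅, id⟩ := isMor_zero F B' id
    have hz3 : IsZeroMor A B' (Mor.comp A i ⟨F.verts, ∅, id⟩) := by
      apply isZeroMor_comp hi1.1
      intro v hv
      show i.map v ∈ F.verts
      have hv' : v ∈ (A.quot i.cut1).verts := by rw [quot_verts']; exact hv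
      have hmem := hi3.1.mapsTo hv'
      exact (Finset.mem_inter.mp (show i.map v ∈ i.cut2 ∩ F.verts from hmem)).2
    obtain ⟨w, hw, hwe, hwu⟩ := hcoker.2 B' ⟨F.verts, ∅, id⟩ huz hz3
    have hπ : IsMor B B' ⟨p.cut2, (B.quot p.cut2).verts, id⟩ := isMor_proj hp2
    have hmapsTo : ∀ v ∈ F.verts \ p.cut1, p.map v ∈ p.cut2 := by
      intro v hv
      have hv' : v ∈ (F.quot p.cut1).verts := by rw [quot_verts']; exact hv
      have hmem := hp3.1.mapsTo hv'
      exact (Finset.mem_inter.mp (show p.map v ∈ p.cut2 ∩ B.verts from hmem)).1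
    have hmapsTo2 : ∀ v ∈ F.verts \ p.cut1, p.map v ∈ B.verts := by
      intro v hv
      have hv' : v ∈ (F.quot p.cut1).verts := by rw [quot_verts']; exact hv
      have hmem := hp3.1.mapsTo hv'
      exact (Finset.mem_inter.mp (show p.map v ∈ p.cut2 ∩ B.verts from hmem)).2
    have hπeq : MorEq F (Mor.comp F p ⟨p.cut2, (B.quot p.cut2).verts, id⟩)
        ⟨F.verts, ∅, id⟩ := by
      apply morEq_comp_intro
      · show p.cut1 ∪ (F.verts \ p.cut1).filter (fun v => p.map v ∈ p.cut2) = F.verts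
        rw [Finset.filter_true_of_mem hmapsTo]
        exact Finset.union_sdiff_of_subset hp1.1
      · show (F.verts \ F.verts).image (id ∘ p.map) = ∅
        rw [Finset.sdiff_self, Finset.image_empty]
      · intro v hv
        have hv' : v ∈ F.verts \ F.verts := hv
        rw [Finset.sdiff_self] at hv'
        exact absurd hv' (Finset.notMem_empty v)
    have hzeq : MorEq F (Mor.comp F p ⟨B.verts, ∅, id⟩) ⟨F.verts, ∅, id⟩ := by
      apply morEq_comp_intro
      · show p.cut1 ∪ (F.verts \ p.cut1).filter (fun v => p.map v ∈ B.verts) = F.verts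
        rw [Finset.filter_true_of_mem hmapsTo2]
        exact Finset.union_sdiff_of_subset hp1.1
      · show (F.verts \ F.verts).image (id ∘ p.map) = ∅
        rw [Finset.sdiff_self, Finset.image_empty]
      · intro v hv
        have hv' : v ∈ F.verts \ F.verts := hv
        rw [Finset.sdiff_self] at hv'
        exact absurd hv' (Finset.notMem_empty v)
    have h1 : w.cut1 = p.cut2 := (hwu ⟨p.cut2, (B.quot p.cut2).verts, id⟩ hπ hπeq).1
    have h2 : w.cut1 = B.verts := (hwu ⟨B.verts, ∅, id⟩ (isMor_zero B B' id) hzeq).1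
    rw [← h1, h2]
  refine ⟨i.cut2, hi2, hC1, rfl, ?_, hD1, hT, ?_⟩
  · refine isoMap_congr (G := A.quot i.cut1) (H := F.restrict i.cut2)
      ?_ ?_ rfl (fun _ _ => rfl) hi3
    · rw [hC1, quot_verts', Finset.sdiff_empty]
    · intro v hv
      have hv' : v ∈ A.verts := by
        rw [quot_verts', hC1, Finset.sdiff_empty] at hv; exact hv
      rw [hC1]
      exact quot_empty_parent A v hv'
  · rw [← hD1, ← hT]; exact hp3

end Forest

open Forest in
/-- For every forest `F` and admissible cut (with severed part `S`),
the sequence `∅ → P_C(F) → F → R_C(F) → ∅` with maps `(C_null, C, id)` and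
`(C, C_full, id)` is short exact; and every short exact sequence
`∅ → A → F → B → ∅` in `LRF` arises from such a one by composing with
isomorphisms `A ≅ P_C(F)` and `R_C(F) ≅ B`. -/
theorem LRF_short_exact_sequences :
    (∀ (F : Forest) (S : Finset ℕ), F.IsSub S →
      IsShortExact (F.restrict S) F (F.quot S)
        (⟨∅, S, id⟩ : Mor) (⟨S, (F.quot S).verts, id⟩ : Mor)) ∧
    (∀ (A F B : Forest) (i p : Mor), IsShortExact A F B i p →
      ∃ S : Finset ℕ, F.IsSub S ∧
        i.cut1 = ∅ ∧ i.cut2 = S ∧ IsoMap A (F.restrict S) i.map ∧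
        p.cut1 = S ∧ p.cut2 = B.verts ∧
        IsoMap (F.quot S) (B.restrict B.verts) p.map) :=
  ⟨part1, part2⟩
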